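/- arXiv:1809.03930 — 6 statements merged into one kernel-verified Lean document; each statement's English description precedes it below -/
import Mathlib

section
/- Let C, D be real symmetric n×n matrices with eigenvalues c₁ ≥ ... ≥ cₙ and d₁ ≥ ... ≥ dₙ respectively. Then trace(CD) ≤ Σᵢ cᵢ dᵢ. -/
open Matrix

/-- Theobald's trace inequality: for real symmetric matrices C, D
with eigenvalues c₁ ≥ ... ≥ cₙ and d₁ ≥ ... ≥ dₙ, trace(CD) ≤ Σᵢ cᵢ dᵢ. -/
theorem theobald_trace_inequality
    (n : ℕ) (C D U W : Matrix (Fin n) (Fin n) ℝ) (c d : Fin n → ℝ)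
    (hCsym : C.IsSymm) (hDsym : D.IsSymm)
    (hU : Uᵀ * U = 1) (hW : Wᵀ * W = 1)
    (hc : Antitone c) (hd : Antitone d)
    (hC : C = U * Matrix.diagonal c * Uᵀ)
    (hD : D = W * Matrix.diagonal d * Wᵀ) :
    (C * D).trace ≤ ∑ i : Fin n, c i * d i := by
  set V : Matrix (Fin n) (Fin n) ℝ := Uᵀ * W with hV
  have hUUt : U * Uᵀ = 1 := (mul_eq_one_comm).mp hU
  have hWWt : W * Wᵀ = 1 := (mul_eq_one_comm).mp hW
  have hVt : Vᵀ = Wᵀ * U := by rw [hV, Matrix.transpose_mul, Matrix.transpose_transpose]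
  have hVVt : V * Vᵀ = 1 := by
    rw [hV, hVt]
    calc Uᵀ * W * (Wᵀ * U) = Uᵀ * (W * Wᵀ) * U := by
          simp only [Matrix.mul_assoc]
    _ = 1 := by rw [hWWt, Matrix.mul_one, hU]
  have hVtV : Vᵀ * V = 1 := (mul_eq_one_comm).mp hVVt
  -- trace(C D) = ∑ i j, (V i j)^2 * (c i * d j)
  have htrace : (C * D).trace = ∑ i, ∑ j, (V i j)^2 * (c i * d j) := by
    have h1 : C * D = U * (Matrix.diagonal c * (V * Matrix.diagonal d * Vᵀ)) * Uᵀ := by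
      rw [hC, hD, hV, hVt]
      simp only [Matrix.mul_assoc]
      rw [hUUt, Matrix.mul_one]
    rw [h1, Matrix.trace_mul_cycle, ← Matrix.mul_assoc, hU, Matrix.one_mul]
    rw [Matrix.trace]
    refine Finset.sum_congr rfl (fun i _ => ?_)
    rw [Matrix.diag_apply, Matrix.diagonal_mul, Matrix.mul_apply, Finset.mul_sum]
    refine Finset.sum_congr rfl (fun j _ => ?_)
    rw [Matrix.mul_diagonal, Matrix.transpose_apply]
    ring
  rw [htrace]
  -- S is doubly stochastic
  set S : Matrix (Fin n) (Fin n) ℝ := fun i j => (V i j)^2 with hS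
  have hSmem : S ∈ doublyStochastic ℝ (Fin n) := by
    rw [mem_doublyStochastic_iff_sum]
    refine ⟨fun i j => sq_nonneg _, fun i => ?_, fun j => ?_⟩
    · have := congrFun (congrFun hVVt i) i
      rw [Matrix.mul_apply] at this
      simp only [Matrix.one_apply_eq] at this
      rw [← this]
      exact Finset.sum_congr rfl (fun j _ => by rw [Matrix.transpose_apply]; ring)
    · have := congrFun (congrFun hVtV j) j
      rw [Matrix.mul_apply] at this
      simp only [Matrix.one_apply_eq] at this
      rw [← this]
      exact Finset.sum_congr rfl (fun i _ => by rw [Matrix.transpose_apply]; ring)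
  obtain ⟨w, hw0, hw1, hwS⟩ := exists_eq_sum_perm_of_mem_doublyStochastic hSmem
  have hmono : Monovary c d := hc.monovary hd
  have hSexp : ∀ i j, (V i j)^2 = ∑ σ : Equiv.Perm (Fin n), w σ * (σ.permMatrix ℝ) i j := by
    intro i j
    have h := congrFun (congrFun hwS i) j
    rw [Matrix.sum_apply] at h
    simp only [Matrix.smul_apply, smul_eq_mul] at h
    exact h.symm
  calc ∑ i, ∑ j, (V i j)^2 * (c i * d j)
      = ∑ σ : Equiv.Perm (Fin n), w σ * ∑ i, c i * d (σ i) := by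
        simp only [hSexp, Finset.sum_mul]
        have step1 : ∀ i : Fin n, (∑ j, ∑ σ : Equiv.Perm (Fin n),
            w σ * (σ.permMatrix ℝ) i j * (c i * d j))
            = ∑ σ : Equiv.Perm (Fin n), ∑ j, w σ * (σ.permMatrix ℝ) i j * (c i * d j) :=
          fun i => Finset.sum_comm
        simp only [step1]
        rw [Finset.sum_comm]
        refine Finset.sum_congr rfl (fun σ _ => ?_)
        rw [Finset.mul_sum]
        refine Finset.sum_congr rfl (fun i _ => ?_)
        rw [Finset.sum_eq_single (σ i)]
        · simp [Equiv.Perm.permMatrix, PEquiv.toMatrix_apply, Equiv.toPEquiv_apply]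
        · intro j _ hj
          simp [Equiv.Perm.permMatrix, PEquiv.toMatrix_apply, Equiv.toPEquiv_apply, Ne.symm hj]
        · simp
    _ ≤ ∑ σ : Equiv.Perm (Fin n), w σ * ∑ i, c i * d i := by
        refine Finset.sum_le_sum (fun σ _ => ?_)
        exact mul_le_mul_of_nonneg_left (hmono.sum_mul_comp_perm_le_sum_mul) (hw0 σ)
    _ = ∑ i, c i * d i := by rw [← Finset.sum_mul, hw1, one_mul]
end

section
/- Let N, R ∈ ℝ^{m×m} be symmetric positive definite, H' ∈ ℝ^{m×l} of full column rank, S' = (H')ᵗ R⁻¹ H', G' = (H')ᵗ N⁻¹ H', and P the rank-r spectral projection of S'. Then trace(G' (S')⁻¹ P) ≤ Σ_{i=1}^r λᵢ(R^{1/2} N⁻¹ R^{1/2}), where λᵢ denotes the i-th largest eigenvalue. -/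
open Matrix

noncomputable def indDiag (l r : ℕ) : Matrix (Fin l) (Fin l) ℝ :=
  Matrix.diagonal (fun i => if (i : ℕ) < r then (1 : ℝ) else 0)

lemma maiAux_sum_ind (m r : ℕ) (hrm : r ≤ m) :
    (∑ j : Fin m, if (j : ℕ) < r then (1:ℝ) else 0) = r := by
  rw [Fin.sum_univ_eq_sum_range (fun j => if j < r then (1:ℝ) else 0)]
  rw [← Finset.sum_filter]
  have : (Finset.range m).filter (fun j => j < r) = Finset.range r := by
    ext j; simp [Finset.mem_filter, Finset.mem_range]; omega
  simp [this]

lemma maiAux_conj_diag {m l : ℕ} (X : Matrix (Fin m) (Fin l) ℝ) (w : Fin m → ℝ) (i k : Fin l) :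
    (Xᵀ * Matrix.diagonal w * X) i k = ∑ j, w j * X j i * X j k := by
  rw [Matrix.mul_apply]
  simp only [Matrix.mul_diagonal, Matrix.transpose_apply]
  exact Finset.sum_congr rfl (fun j _ => by ring)

lemma maiAux_conj_diag' {m l : ℕ} (X : Matrix (Fin m) (Fin l) ℝ) (w : Fin l → ℝ) (j k : Fin m) :
    (X * Matrix.diagonal w * Xᵀ) j k = ∑ i, w i * X j i * X k i := by
  rw [Matrix.mul_apply]
  simp only [Matrix.mul_diagonal, Matrix.transpose_apply]
  exact Finset.sum_congr rfl (fun i _ => by ring)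

lemma maiAux_trace_mul_diag {l : ℕ} (A : Matrix (Fin l) (Fin l) ℝ) (e : Fin l → ℝ) :
    (A * Matrix.diagonal e).trace = ∑ i, A i i * e i := by
  simp [Matrix.trace, Matrix.mul_diagonal, Matrix.diag]

lemma maiAux_inj_of_rank {m l : ℕ} (A : Matrix (Fin m) (Fin l) ℝ) (h : A.rank = l) :
    Function.Injective A.mulVec := by
  have hker : LinearMap.ker A.mulVecLin = ⊥ := by
    have h1 := A.mulVecLin.finrank_range_add_finrank_ker
    rw [show Module.finrank ℝ (LinearMap.range A.mulVecLin) = l from h] at h1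
    simp only [Module.finrank_pi, Fintype.card_fin] at h1
    exact Submodule.finrank_eq_zero.mp (by omega)
  exact (LinearMap.ker_eq_bot (f := A.mulVecLin)).mp hker

lemma maiAux_quadform {m l : ℕ} (X : Matrix (Fin m) (Fin l) ℝ) (A : Matrix (Fin m) (Fin m) ℝ)
    (i k : Fin l) :
    (Xᵀ * A * X) i k = dotProduct (fun j => X j i) (A *ᵥ (fun j => X j k)) := by
  simp only [Matrix.mul_apply, Matrix.transpose_apply, Matrix.mulVec, dotProduct,
    Finset.sum_mul, Finset.mul_sum]
  rw [Finset.sum_comm]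
  exact Finset.sum_congr rfl fun j _ => Finset.sum_congr rfl fun p _ => by ring

lemma maiAux_posdef_tmul {m l : ℕ} (K : Matrix (Fin m) (Fin l) ℝ)
    (hK : Function.Injective K.mulVec) : (Kᵀ * K).PosDef := by
  refine Matrix.PosDef.of_dotProduct_mulVec_pos (by simpa using Matrix.isHermitian_conjTranspose_mul_self K) fun x hx => ?_
  have hx' : K *ᵥ x ≠ 0 := by
    intro h
    exact hx (hK (by rw [h, Matrix.mulVec_zero]))
  have hs : star x = x := by funext i; simp
  rw [hs, ← Matrix.mulVec_mulVec, Matrix.dotProduct_mulVec, Matrix.vecMul_transpose]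
  have h0 : 0 ≤ (K *ᵥ x) ⬝ᵥ (K *ᵥ x) := Finset.sum_nonneg fun i _ => mul_self_nonneg _
  refine lt_of_le_of_ne h0 ?_
  intro h
  exact hx' (dotProduct_self_eq_zero.mp h.symm)

set_option maxHeartbeats 2000000 in
/-- Lemma 1: trace(G' (S')⁻¹ P) ≤ Σ_{i=1}^r λᵢ(R^{1/2} N⁻¹ R^{1/2}). -/
theorem mai_rr_upper_bound
    (m l r : ℕ) (hlm : l < m) (hr1 : 1 ≤ r) (hrl : r ≤ l)
    (N R : Matrix (Fin m) (Fin m) ℝ)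
    (hNsym : N.IsSymm) (hNpd : N.PosDef)
    (hRsym : R.IsSymm) (hRpd : R.PosDef)
    (H' : Matrix (Fin m) (Fin l) ℝ) (hrank : H'.rank = l)
    (S' G' : Matrix (Fin l) (Fin l) ℝ)
    (hS' : S' = H'ᵀ * R⁻¹ * H') (hG' : G' = H'ᵀ * N⁻¹ * H')
    -- eigendecomposition of S'
    (V : Matrix (Fin l) (Fin l) ℝ) (d : Fin l → ℝ)
    (hV : Vᵀ * V = 1) (hd : Antitone d)
    (hSdec : S' = V * Matrix.diagonal d * Vᵀ)
    (P : Matrix (Fin l) (Fin l) ℝ) (hP : P = V * indDiag l r * Vᵀ)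
    -- positive definite square root of R and eigendecomposition of R^{1/2} N⁻¹ R^{1/2}
    (Rsqrt : Matrix (Fin m) (Fin m) ℝ)
    (hRsqrtsym : Rsqrt.IsSymm) (hRsqrtpd : Rsqrt.PosDef)
    (hRsqrt : Rsqrt * Rsqrt = R)
    (U : Matrix (Fin m) (Fin m) ℝ) (μ : Fin m → ℝ)
    (hU : Uᵀ * U = 1) (hμ : Antitone μ)
    (hMdec : Rsqrt * N⁻¹ * Rsqrt = U * Matrix.diagonal μ * Uᵀ) :
    (G' * S'⁻¹ * P).trace ≤ ∑ i : Fin m, (if (i : ℕ) < r then μ i else 0) := by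
  classical
  have hRsU : IsUnit Rsqrt.det := (Matrix.isUnit_iff_isUnit_det _).mp hRsqrtpd.isUnit
  haveI : Invertible Rsqrt := Rsqrt.invertibleOfIsUnitDet hRsU
  have hRs1 : Rsqrt⁻¹ * Rsqrt = 1 := Matrix.nonsing_inv_mul _ hRsU
  have hRs2 : Rsqrt * Rsqrt⁻¹ = 1 := Matrix.mul_nonsing_inv _ hRsU
  have hRsinvsym : (Rsqrt⁻¹)ᵀ = Rsqrt⁻¹ := by
    rw [Matrix.transpose_nonsing_inv, hRsqrtsym]
  set K : Matrix (Fin m) (Fin l) ℝ := Rsqrt⁻¹ * H' with hKdef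
  set M : Matrix (Fin m) (Fin m) ℝ := Rsqrt * N⁻¹ * Rsqrt with hMdef
  have hRinv : R⁻¹ = Rsqrt⁻¹ * Rsqrt⁻¹ := by rw [← hRsqrt, Matrix.mul_inv_rev]
  have hSK : S' = Kᵀ * K := by
    rw [hS', hRinv, hKdef, Matrix.transpose_mul, hRsinvsym]
    simp only [Matrix.mul_assoc]
  have hGK : G' = Kᵀ * M * K := by
    rw [hG', hKdef, hMdef, Matrix.transpose_mul, hRsinvsym]
    simp only [Matrix.mul_assoc, Matrix.inv_mul_cancel_left_of_invertible,
      Matrix.mul_inv_cancel_left_of_invertible]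
  have hVVt : V * Vᵀ = 1 := mul_eq_one_comm.mp hV
  have hUUt : U * Uᵀ = 1 := mul_eq_one_comm.mp hU
  -- injectivity of K and positive definiteness of S'
  have hKH : Rsqrt * K = H' := by
    rw [hKdef, ← Matrix.mul_assoc, hRs2, Matrix.one_mul]
  have hKinj : Function.Injective K.mulVec := by
    have hHinj := maiAux_inj_of_rank H' hrank
    intro x y hxy
    apply hHinj
    rw [← hKH, ← Matrix.mulVec_mulVec, hxy, Matrix.mulVec_mulVec]
  have hSpd : S'.PosDef := hSK ▸ maiAux_posdef_tmul K hKinj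
  -- positivity of eigenvalues d
  have hVSV : Vᵀ * S' * V = Matrix.diagonal d := by
    rw [hSdec]
    simp only [Matrix.mul_assoc]
    rw [hV, Matrix.mul_one, ← Matrix.mul_assoc, hV, Matrix.one_mul]
  have hdpos : ∀ i, 0 < d i := by
    intro i
    have h1 : Matrix.diagonal d i i
        = dotProduct (fun j => V j i) (S' *ᵥ fun j => V j i) := by
      rw [← hVSV]; exact maiAux_quadform V S' i i
    rw [Matrix.diagonal_apply_eq] at h1
    have hvne : (fun j => V j i) ≠ 0 := by
      intro h
      have h2 := congrFun (congrFun hV i) i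
      rw [Matrix.mul_apply] at h2
      simp only [Matrix.transpose_apply, Matrix.one_apply_eq] at h2
      have h3 : ∀ j, V j i = 0 := fun j => congrFun h j
      simp [h3] at h2
    have h4 := hSpd.dotProduct_mulVec_pos hvne
    have hs : star (fun j => V j i) = (fun j => V j i) := by funext j; simp
    rw [hs] at h4
    rw [h1]; exact h4
  have hdne : ∀ i, d i ≠ 0 := fun i => (hdpos i).ne'
  -- inverse of S'
  have hSinv : S'⁻¹ = V * Matrix.diagonal (fun i => (d i)⁻¹) * Vᵀ := by
    apply Matrix.inv_eq_right_inv
    rw [hSdec]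
    simp only [Matrix.mul_assoc]
    rw [← Matrix.mul_assoc Vᵀ V, hV, Matrix.one_mul,
      ← Matrix.mul_assoc (Matrix.diagonal d) (Matrix.diagonal _) Vᵀ,
      Matrix.diagonal_mul_diagonal]
    have : (fun i => d i * (d i)⁻¹) = fun _ => (1:ℝ) :=
      funext fun i => mul_inv_cancel₀ (hdne i)
    rw [this, Matrix.diagonal_one, Matrix.one_mul, hVVt]
  -- the combined diagonal
  set e : Fin l → ℝ := fun i => if (i : ℕ) < r then (d i)⁻¹ else 0 with hedef
  have hGSP : G' * S'⁻¹ * P = G' * V * Matrix.diagonal e * Vᵀ := by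
    rw [hSinv, hP, hedef]
    simp only [indDiag, Matrix.mul_assoc]
    rw [← Matrix.mul_assoc Vᵀ V, hV, Matrix.one_mul,
      ← Matrix.mul_assoc (Matrix.diagonal _) (Matrix.diagonal _) Vᵀ,
      Matrix.diagonal_mul_diagonal]
    congr 2
    funext i
    by_cases h : (i : ℕ) < r <;> simp [h]
  set A : Matrix (Fin l) (Fin l) ℝ := Vᵀ * G' * V with hAdef
  have htr : (G' * S'⁻¹ * P).trace = ∑ i, A i i * e i := by
    rw [hGSP, Matrix.trace_mul_comm, ← maiAux_trace_mul_diag]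
    congr 1
    rw [hAdef]
    simp only [Matrix.mul_assoc]
  -- B and its properties
  set B : Matrix (Fin m) (Fin l) ℝ := Uᵀ * (K * V) with hBdef
  have hA : A = Bᵀ * Matrix.diagonal μ * B := by
    rw [hAdef, hGK, hMdec, hBdef]
    simp only [Matrix.transpose_mul, Matrix.transpose_transpose, Matrix.mul_assoc]
  have hBtB : Bᵀ * B = Matrix.diagonal d := by
    rw [hBdef]
    simp only [Matrix.transpose_mul, Matrix.transpose_transpose, Matrix.mul_assoc]
    rw [← Matrix.mul_assoc U Uᵀ, hUUt, Matrix.one_mul]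
    have h8 : Vᵀ * (Kᵀ * (K * V)) = Vᵀ * S' * V := by
      rw [hSK]; simp only [Matrix.mul_assoc]
    rw [h8, hVSV]
  have hBcol : ∀ i, (∑ j, B j i * B j i) = d i := by
    intro i
    have h9 := congrFun (congrFun hBtB i) i
    rw [Matrix.mul_apply] at h9
    simpa [Matrix.transpose_apply] using h9
  -- the projection Q
  set Q : Matrix (Fin m) (Fin m) ℝ := B * Matrix.diagonal (fun i => (d i)⁻¹) * Bᵀ with hQdef
  have hQsymm : ∀ a b, Q a b = Q b a := by
    intro a b
    have hQt : Qᵀ = Q := by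
      rw [hQdef]
      simp only [Matrix.transpose_mul, Matrix.transpose_transpose, Matrix.diagonal_transpose,
        Matrix.mul_assoc]
    have h := congrFun (congrFun hQt b) a
    rw [Matrix.transpose_apply] at h
    exact h
  have hQQ : Q * Q = Q := by
    rw [hQdef]
    simp only [Matrix.mul_assoc]
    rw [← Matrix.mul_assoc Bᵀ B, hBtB,
      ← Matrix.mul_assoc (Matrix.diagonal d) (Matrix.diagonal _) Bᵀ,
      Matrix.diagonal_mul_diagonal]
    have : (fun i => d i * (d i)⁻¹) = fun _ => (1:ℝ) :=
      funext fun i => mul_inv_cancel₀ (hdne i)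
    rw [this, Matrix.diagonal_one, Matrix.one_mul]
  have hQentry : ∀ j, Q j j = ∑ i, (d i)⁻¹ * B j i * B j i := by
    intro j; rw [hQdef]; exact maiAux_conj_diag' B _ j j
  have hQnonneg : ∀ j, 0 ≤ Q j j := by
    intro j
    rw [hQentry]
    refine Finset.sum_nonneg fun i _ => ?_
    have := (hdpos i).le
    have h10 : 0 ≤ (d i)⁻¹ := inv_nonneg.mpr this
    nlinarith [mul_self_nonneg (B j i)]
  have hQle1 : ∀ j, Q j j ≤ 1 := by
    intro j
    have h6 := congrFun (congrFun hQQ j) j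
    rw [Matrix.mul_apply] at h6
    have h7 : Q j j * Q j j ≤ ∑ k, Q j k * Q k j := by
      refine Finset.single_le_sum (f := fun k => Q j k * Q k j) (fun k _ => ?_)
        (Finset.mem_univ j)
      show (0:ℝ) ≤ Q j k * Q k j
      rw [hQsymm k j]
      exact mul_self_nonneg _
    rw [h6] at h7
    nlinarith [hQnonneg j]
  -- the weights c
  set c : Fin m → ℝ := fun j => ∑ i : Fin l, if (i : ℕ) < r then (d i)⁻¹ * B j i * B j i else 0
    with hcdef
  have hcj : ∀ j, c j
      = ∑ i : Fin l, (if (i : ℕ) < r then (d i)⁻¹ * B j i * B j i else 0) := fun j => rfl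
  have hc_le_Q : ∀ j, c j ≤ Q j j := by
    intro j
    rw [hcj j, hQentry]
    refine Finset.sum_le_sum fun i _ => ?_
    split_ifs with h
    · exact le_rfl
    · have h10 : 0 ≤ (d i)⁻¹ := inv_nonneg.mpr (hdpos i).le
      nlinarith [mul_self_nonneg (B j i)]
  have hc_nonneg : ∀ j, 0 ≤ c j := by
    intro j
    rw [hcj j]
    refine Finset.sum_nonneg fun i _ => ?_
    split_ifs with h
    · have h10 : 0 ≤ (d i)⁻¹ := inv_nonneg.mpr (hdpos i).le
      nlinarith [mul_self_nonneg (B j i)]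
    · exact le_rfl
  have hc_le1 : ∀ j, c j ≤ 1 := fun j => (hc_le_Q j).trans (hQle1 j)
  have hc_sum : ∑ j, c j = (r : ℝ) := by
    have h11 : ∀ i : Fin l,
        (∑ j, if (i : ℕ) < r then (d i)⁻¹ * B j i * B j i else 0)
          = (if (i : ℕ) < r then (1:ℝ) else 0) := by
      intro i
      split_ifs with h
      · have : (∑ j, (d i)⁻¹ * B j i * B j i) = (d i)⁻¹ * ∑ j, B j i * B j i := by
          rw [Finset.mul_sum]
          exact Finset.sum_congr rfl fun j _ => by ring
        rw [this, hBcol i, inv_mul_cancel₀ (hdne i)]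
      · simp [h]
    calc (∑ j : Fin m, c j)
        = ∑ j : Fin m, ∑ i : Fin l, (if (i : ℕ) < r then (d i)⁻¹ * B j i * B j i else 0) :=
          Finset.sum_congr rfl fun j _ => hcj j
      _ = ∑ i : Fin l, ∑ j : Fin m, (if (i : ℕ) < r then (d i)⁻¹ * B j i * B j i else 0) :=
          Finset.sum_comm
      _ = ∑ i : Fin l, if (i : ℕ) < r then (1:ℝ) else 0 :=
          Finset.sum_congr rfl fun i _ => h11 i
      _ = (r : ℝ) := maiAux_sum_ind l r hrl
  -- trace as weighted sum
  have htr2 : (G' * S'⁻¹ * P).trace = ∑ j, μ j * c j := by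
    rw [htr]
    have hAii : ∀ i, A i i = ∑ j, μ j * B j i * B j i := by
      intro i; rw [hA]; exact maiAux_conj_diag B μ i i
    calc (∑ i, A i i * e i)
        = ∑ i : Fin l, ∑ j : Fin m, (if (i : ℕ) < r then μ j * ((d i)⁻¹ * B j i * B j i) else 0) := by
          refine Finset.sum_congr rfl fun i _ => ?_
          rw [hAii i, hedef]
          simp only [mul_ite, mul_zero]
          split_ifs with h
          · rw [Finset.sum_mul]
            exact Finset.sum_congr rfl fun j _ => by ring
          · simp
      _ = ∑ j : Fin m, ∑ i : Fin l, (if (i : ℕ) < r then μ j * ((d i)⁻¹ * B j i * B j i) else 0) :=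
          Finset.sum_comm
      _ = ∑ j, μ j * c j := by
          refine Finset.sum_congr rfl fun j _ => ?_
          rw [hcj j, Finset.mul_sum]
          refine Finset.sum_congr rfl fun i _ => ?_
          split_ifs with h
          · ring
          · simp
  rw [htr2]
  -- the majorization step
  have hrm : r - 1 < m := by omega
  set t : ℝ := μ ⟨r - 1, hrm⟩ with htdef
  have hts : ∀ j : Fin m, (j : ℕ) < r → t ≤ μ j := by
    intro j hj
    exact hμ (by rw [Fin.le_def]; simp; omega)
  have hts' : ∀ j : Fin m, r ≤ (j : ℕ) → μ j ≤ t := by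
    intro j hj
    exact hμ (by rw [Fin.le_def]; simp; omega)
  have key : ∀ j : Fin m, μ j * c j ≤ (if (j : ℕ) < r then μ j - t else 0) + t * c j := by
    intro j
    split_ifs with h
    · have h1 : 0 ≤ μ j - t := sub_nonneg.mpr (hts j h)
      nlinarith [hc_le1 j]
    · have h1 : μ j - t ≤ 0 := sub_nonpos.mpr (hts' j (by omega))
      nlinarith [hc_nonneg j]
  calc (∑ j : Fin m, μ j * c j)
      ≤ ∑ j : Fin m, ((if (j : ℕ) < r then μ j - t else 0) + t * c j) :=
        Finset.sum_le_sum fun j _ => key j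
    _ = (∑ j : Fin m, (if (j : ℕ) < r then μ j - t else 0)) + t * ∑ j : Fin m, c j := by
        rw [Finset.sum_add_distrib, Finset.mul_sum]
    _ = (∑ j : Fin m, (if (j : ℕ) < r then μ j else 0))
          - (∑ j : Fin m, (if (j : ℕ) < r then t else 0)) + t * r := by
        rw [hc_sum, ← Finset.sum_sub_distrib]
        congr 1
        refine Finset.sum_congr rfl fun j _ => ?_
        split_ifs with h <;> simp
    _ = ∑ j : Fin m, (if (j : ℕ) < r then μ j else 0) := by
        have : (∑ j : Fin m, (if (j : ℕ) < r then t else 0)) = t * r := by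
          rw [show (fun j : Fin m => if (j:ℕ) < r then t else 0)
              = fun j : Fin m => t * (if (j:ℕ) < r then (1:ℝ) else 0) from
            funext fun j => by split_ifs <;> simp]
          rw [← Finset.mul_sum, maiAux_sum_ind m r (by omega)]
        rw [this]; ring
end

section
/- Let N ∈ ℝ^{m×m} be symmetric positive definite, H₀' ∈ ℝ^{m×l₀} of full column rank with l₀ < m, and R = H₀'(H₀')ᵗ + N. Then for each 1 ≤ i ≤ l₀, λᵢ(R N⁻¹) = λᵢ(G₀') + 1, where G₀' = (H₀')ᵗ N⁻¹ H₀' and λᵢ denotes the i-th largest eigenvalue. -/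
open Matrix Polynomial

/-- λᵢ(R N⁻¹) = λᵢ(G₀') + 1 for 1 ≤ i ≤ l₀, where
R = H₀'(H₀')ᵗ + N and G₀' = (H₀')ᵗ N⁻¹ H₀'. -/
theorem eigenvalues_RNinv_shift
    (m l₀ : ℕ) (hml : l₀ < m)
    (N : Matrix (Fin m) (Fin m) ℝ) (hNsym : N.IsSymm) (hNpd : N.PosDef)
    (H₀' : Matrix (Fin m) (Fin l₀) ℝ) (hrank : H₀'.rank = l₀)
    (R : Matrix (Fin m) (Fin m) ℝ) (hR : R = H₀' * H₀'ᵀ + N)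
    (G₀' : Matrix (Fin l₀) (Fin l₀) ℝ) (hG₀ : G₀' = H₀'ᵀ * N⁻¹ * H₀')
    -- eigenvalues of R N⁻¹ (similar to a symmetric matrix, so diagonalizable over ℝ)
    (Pm : Matrix (Fin m) (Fin m) ℝ) (hPm : IsUnit Pm.det)
    (μ : Fin m → ℝ) (hμ : Antitone μ)
    (hRN : R * N⁻¹ = Pm * Matrix.diagonal μ * Pm⁻¹)
    -- eigendecomposition of the symmetric matrix G₀'
    (W : Matrix (Fin l₀) (Fin l₀) ℝ) (γ : Fin l₀ → ℝ)
    (hW : Wᵀ * W = 1) (hγ : Antitone γ)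
    (hGdec : G₀' = W * Matrix.diagonal γ * Wᵀ) :
    ∀ i : Fin l₀, μ (Fin.castLE (le_of_lt hml) i) = γ i + 1 := by
  classical
  have hNdet : IsUnit N.det := isUnit_iff_ne_zero.mpr hNpd.det_pos.ne'
  have hNinv : N * N⁻¹ = 1 := mul_nonsing_inv N hNdet
  set B : Matrix (Fin l₀) (Fin m) ℝ := H₀'ᵀ * N⁻¹ with hB
  have hBH : B * H₀' = G₀' := by rw [hG₀, hB, Matrix.mul_assoc, ← Matrix.mul_assoc]
  have hRN1 : R * N⁻¹ = H₀' * B + 1 := by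
    rw [hR, Matrix.add_mul, hNinv, Matrix.mul_assoc]
  -- W is orthogonal both ways
  have hWW : W * Wᵀ = 1 := mul_eq_one_comm.mp hW
  -- γ is nonnegative
  have hγ0 : ∀ i, 0 ≤ γ i := by
    have hGpsd : G₀'.PosSemidef := by
      rw [hG₀]
      have := (hNpd.inv.posSemidef).conjTranspose_mul_mul_same H₀'
      simpa only [conjTranspose_eq_transpose_of_trivial] using this
    have hdg : Wᵀ * G₀' * W = (Matrix.diagonal γ) := by
      rw [hGdec]
      calc Wᵀ * (W * Matrix.diagonal γ * Wᵀ) * W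
          = (Wᵀ * W) * Matrix.diagonal γ * (Wᵀ * W) := by
            simp only [Matrix.mul_assoc]
        _ = Matrix.diagonal γ := by rw [hW]; simp
    have : (Matrix.diagonal γ).PosSemidef := by
      rw [← hdg]
      have := hGpsd.conjTranspose_mul_mul_same W
      simpa only [conjTranspose_eq_transpose_of_trivial] using this
    exact Matrix.posSemidef_diagonal_iff.mp this
  -- the key polynomial identity
  set k := m - l₀ with hk
  have hmk : m = k + l₀ := by omega
  set p : Polynomial ℝ := ∏ i : Fin m, (X - C (μ i)) with hp
  set q : Polynomial ℝ := (X - C 1) ^ k * ∏ i : Fin l₀, (X - C (γ i + 1)) with hq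
  have hPmU : IsUnit Pm := (Matrix.isUnit_iff_isUnit_det Pm).mpr hPm
  have hpq : p = q := by
    apply Polynomial.eq_of_infinite_eval_eq
    apply Set.Infinite.mono _ ((Set.finite_singleton (1:ℝ)).infinite_compl)
    intro x hx
    have hz : x - 1 ≠ 0 := sub_ne_zero.mpr hx
    set z : ℝ := x - 1 with hzdef
    -- LHS
    have e1 : p.eval x = ∏ i : Fin m, (x - μ i) := by
      simp [hp, Polynomial.eval_prod]
    have e2 : q.eval x = z ^ k * ∏ i : Fin l₀, (x - (γ i + 1)) := by
      simp [hq, Polynomial.eval_prod, hzdef]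
    -- determinant of x•1 - R N⁻¹ two ways
    have d1 : ((x • (1 : Matrix (Fin m) (Fin m) ℝ)) - R * N⁻¹).det
        = ∏ i : Fin m, (x - μ i) := by
      have h1 : (x • (1 : Matrix (Fin m) (Fin m) ℝ)) - R * N⁻¹
          = Pm * ((x • (1 : Matrix (Fin m) (Fin m) ℝ)) - Matrix.diagonal μ) * Pm⁻¹ := by
        rw [hRN, Matrix.mul_sub, Matrix.sub_mul]
        congr 1
        rw [Matrix.mul_smul, Matrix.mul_one, Matrix.smul_mul,
          mul_nonsing_inv Pm hPm]
      rw [h1, Matrix.det_conj hPmU]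
      rw [Matrix.smul_one_eq_diagonal, Matrix.diagonal_sub, Matrix.det_diagonal]
    have d2 : ((x • (1 : Matrix (Fin m) (Fin m) ℝ)) - R * N⁻¹).det
        = z ^ k * ∏ i : Fin l₀, (x - (γ i + 1)) := by
      have hzz : z * (-z⁻¹) = -1 := by field_simp
      have h2 : (x • (1 : Matrix (Fin m) (Fin m) ℝ)) - R * N⁻¹
          = z • (1 + H₀' * ((-z⁻¹) • B)) := by
        rw [hRN1, Matrix.mul_smul, smul_add, smul_smul, hzz, neg_one_smul,
          hzdef, sub_smul, one_smul]
        abel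
      have h3 : ((1 : Matrix (Fin m) (Fin m) ℝ) + H₀' * ((-z⁻¹) • B)).det
          = ((1 : Matrix (Fin l₀) (Fin l₀) ℝ) + (-z⁻¹) • G₀').det := by
        rw [Matrix.det_one_add_mul_comm, Matrix.smul_mul, hBH]
      have h4 : (z • ((1 : Matrix (Fin l₀) (Fin l₀) ℝ) + (-z⁻¹) • G₀')).det
          = ∏ i : Fin l₀, (x - (γ i + 1)) := by
        have h5 : z • ((1 : Matrix (Fin l₀) (Fin l₀) ℝ) + (-z⁻¹) • G₀')
            = z • (1 : Matrix (Fin l₀) (Fin l₀) ℝ) - G₀' := by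
          rw [smul_add, smul_smul]
          have : z * (-z⁻¹) = -1 := by field_simp
          rw [this, neg_one_smul, ← sub_eq_add_neg]
        rw [h5]
        have h6 : z • (1 : Matrix (Fin l₀) (Fin l₀) ℝ) - G₀'
            = W * ((z • (1 : Matrix (Fin l₀) (Fin l₀) ℝ)) - Matrix.diagonal γ) * Wᵀ := by
          rw [hGdec, Matrix.mul_sub, Matrix.sub_mul]
          congr 1
          rw [Matrix.mul_smul, Matrix.mul_one, Matrix.smul_mul, hWW]
        rw [h6, Matrix.det_mul, Matrix.det_mul]
        have h7 : W.det * Wᵀ.det = 1 := by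
          have := congrArg Matrix.det hWW
          rwa [Matrix.det_mul, Matrix.det_one] at this
        rw [mul_comm (W.det * _), ← mul_assoc, mul_comm _ W.det, h7, one_mul]
        rw [Matrix.smul_one_eq_diagonal, Matrix.diagonal_sub, Matrix.det_diagonal]
        apply Finset.prod_congr rfl
        intro i _
        rw [hzdef]; ring
      calc ((x • (1 : Matrix (Fin m) (Fin m) ℝ)) - R * N⁻¹).det
          = (z • ((1 : Matrix (Fin m) (Fin m) ℝ) + H₀' * ((-z⁻¹) • B))).det := by rw [h2]
        _ = z ^ m * ((1 : Matrix (Fin m) (Fin m) ℝ) + H₀' * ((-z⁻¹) • B)).det := by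
            rw [Matrix.det_smul]; simp
        _ = z ^ m * ((1 : Matrix (Fin l₀) (Fin l₀) ℝ) + (-z⁻¹) • G₀').det := by rw [h3]
        _ = z ^ k * (z ^ l₀ * ((1 : Matrix (Fin l₀) (Fin l₀) ℝ) + (-z⁻¹) • G₀').det) := by
            rw [hmk, pow_add]; ring
        _ = z ^ k * (z • ((1 : Matrix (Fin l₀) (Fin l₀) ℝ) + (-z⁻¹) • G₀')).det := by
            rw [Matrix.det_smul]; simp
        _ = z ^ k * ∏ i : Fin l₀, (x - (γ i + 1)) := by rw [h4]
    show p.eval x = q.eval x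
    rw [e1, e2, ← d1, d2]
  -- multiset of roots
  have hroots : (Multiset.map μ Finset.univ.val)
      = Multiset.replicate k 1 + Multiset.map (fun i => γ i + 1) Finset.univ.val := by
    have h1 : p.roots = Multiset.map μ Finset.univ.val := by
      have := Polynomial.roots_multiset_prod_X_sub_C (Multiset.map μ Finset.univ.val)
      rw [Multiset.map_map] at this
      rw [hp, Finset.prod_eq_multiset_prod]
      exact this
    have h2 : q.roots = Multiset.replicate k 1 + Multiset.map (fun i => γ i + 1) Finset.univ.val := by
      have hm1 : ((X - C (1:ℝ)) ^ k).Monic := (monic_X_sub_C 1).pow k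
      have hm2 : (∏ i : Fin l₀, (X - C (γ i + 1))).Monic :=
        monic_prod_of_monic _ _ fun i _ => monic_X_sub_C _
      rw [hq, Polynomial.roots_mul (mul_ne_zero hm1.ne_zero hm2.ne_zero)]
      congr 1
      · rw [Polynomial.roots_pow, Polynomial.roots_X_sub_C, Multiset.nsmul_singleton]
      · have := Polynomial.roots_multiset_prod_X_sub_C
          (Multiset.map (fun i => γ i + 1) Finset.univ.val)
        rw [Multiset.map_map] at this
        rw [Finset.prod_eq_multiset_prod]
        exact this
    rw [← h1, hpq, h2]
  -- convert to lists
  have hofFn : ∀ {n : ℕ} (f : Fin n → ℝ),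
      Multiset.map f Finset.univ.val = (List.ofFn f : Multiset ℝ) := by
    intro n f
    rw [Fin.univ_def]
    simp [List.ofFn_eq_map]
  set L1 : List ℝ := List.ofFn μ with hL1
  set L2 : List ℝ := List.ofFn (fun i => γ i + 1) ++ List.replicate k 1 with hL2
  have hperm : L1.Perm L2 := by
    rw [← Multiset.coe_eq_coe]
    rw [← hofFn μ, hroots]
    rw [hL2, ← Multiset.coe_add, ← hofFn (fun i => γ i + 1), Multiset.coe_replicate]
    rw [add_comm]
  have hs1 : L1.Pairwise (· ≥ ·) := List.pairwise_ofFn.mpr fun i j hij => hμ hij.le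
  have hs2 : L2.Pairwise (· ≥ ·) := by
    rw [hL2, List.pairwise_append]
    refine ⟨List.pairwise_ofFn.mpr fun i j hij => by
        have := hγ hij.le; simp only [ge_iff_le]; linarith,
      List.pairwise_replicate.mpr (Or.inr le_rfl), ?_⟩
    intro a ha b hb
    rw [List.mem_ofFn] at ha
    obtain ⟨i, rfl⟩ := ha
    have hb1 : b = 1 := List.eq_of_mem_replicate hb
    simp only [hb1, ge_iff_le]
    linarith [hγ0 i]
  have hL : L1 = L2 := hperm.eq_of_pairwise' hs1 hs2
  intro i
  have hi1 : (i : ℕ) < (List.ofFn μ).length := by simp; omega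
  have hi2 : (i : ℕ) < (List.ofFn (fun j => γ j + 1)).length := by simp
  have hv1 : (List.ofFn μ)[(i : ℕ)]'hi1 = μ (Fin.castLE (le_of_lt hml) i) := by
    rw [List.getElem_ofFn]
    rfl
  have hv2 : (List.ofFn μ)[(i : ℕ)]'hi1 = γ i + 1 := by
    rw [List.getElem_of_eq hL hi1, List.getElem_append_left hi2,
      List.getElem_ofFn]
  rw [← hv1, hv2]
end

section
/- Let S, G, T ∈ ℝ^{l×l} be symmetric positive definite with T ⪰ S G⁻¹ S (Loewner order). Then trace(S T⁻¹) ≤ trace(G S⁻¹). -/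
open Matrix
open scoped MatrixOrder

variable {n : Type*} [Fintype n] [DecidableEq n]

lemma my_trace_nonneg {A : Matrix n n ℝ} (hA : A.PosSemidef) : 0 ≤ A.trace := by
  apply Finset.sum_nonneg
  intro i _
  have := hA.dotProduct_mulVec_nonneg (Pi.single i 1)
  simpa [dotProduct, mulVec, Pi.single_apply] using this

lemma my_trace_mul_nonneg {A B : Matrix n n ℝ}
    (hA : A.PosSemidef) (hB : B.PosSemidef) : 0 ≤ (A * B).trace := by
  have h2 : (CFC.sqrt A * B * CFC.sqrt A).trace = (A * B).trace := by
    rw [trace_mul_cycle, CFC.sqrt_mul_sqrt_self A hA.nonneg]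
  rw [← h2]
  apply my_trace_nonneg
  have := hB.conjTranspose_mul_mul_same (CFC.sqrt A)
  rwa [(Matrix.nonneg_iff_posSemidef.mp (CFC.sqrt_nonneg A)).1.eq] at this

lemma my_congr_posDef {A N : Matrix n n ℝ} (hA : A.PosDef) (hN : IsUnit N) :
    (Nᴴ * A * N).PosDef := by
  refine PosDef.of_dotProduct_mulVec_pos (isHermitian_conjTranspose_mul_mul N hA.1) fun x hx => ?_
  have hinj := Matrix.mulVec_injective_iff_isUnit.mpr hN
  have hx' : N *ᵥ x ≠ 0 := fun hcon => hx (by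
    have : N *ᵥ x = N *ᵥ 0 := by simpa using hcon
    exact hinj this)
  simpa only [star_mulVec, dotProduct_mulVec, vecMul_vecMul] using hA.dotProduct_mulVec_pos hx'

lemma my_sqrt_isUnit {A : Matrix n n ℝ} (hA : A.PosDef) :
    IsUnit (CFC.sqrt A) := by
  rw [Matrix.isUnit_iff_isUnit_det]
  have h : (CFC.sqrt A).det * (CFC.sqrt A).det = A.det := by
    rw [← det_mul, CFC.sqrt_mul_sqrt_self A hA.posSemidef.nonneg]
  have := hA.det_pos
  refine isUnit_iff_ne_zero.mpr (fun h0 => ?_)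
  rw [h0, mul_zero] at h
  exact absurd h.symm (ne_of_gt this)

lemma my_inv_antitone {A B : Matrix n n ℝ} (hA : A.PosDef) (hB : B.PosDef)
    (h : (B - A).PosSemidef) : (A⁻¹ - B⁻¹).PosSemidef := by
  set R := CFC.sqrt A with hRdef
  have hRR : R * R = A := CFC.sqrt_mul_sqrt_self A hA.posSemidef.nonneg
  have hRherm : R.IsHermitian := (Matrix.nonneg_iff_posSemidef.mp (CFC.sqrt_nonneg A)).1
  have hRunit : IsUnit R := my_sqrt_isUnit hA
  have hRdet : IsUnit R.det := (Matrix.isUnit_iff_isUnit_det R).mp hRunit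
  have hRiherm : R⁻¹.IsHermitian := hRherm.inv
  set C := R⁻¹ * B * R⁻¹ with hCdef
  have hRinvUnit : IsUnit R⁻¹ := (Matrix.isUnit_nonsing_inv_iff).mpr hRunit
  have hCpd : C.PosDef := by
    have := my_congr_posDef hB hRinvUnit
    rwa [hRiherm.eq] at this
  have hRAR : R⁻¹ * A * R⁻¹ = 1 := by
    rw [← hRR, ← Matrix.mul_assoc, Matrix.mul_assoc (R⁻¹ * R),
      Matrix.mul_nonsing_inv R hRdet, Matrix.nonsing_inv_mul R hRdet, Matrix.mul_one]
  have hC1 : (C - 1).PosSemidef := by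
    have := h.conjTranspose_mul_mul_same R⁻¹
    rwa [hRiherm.eq, Matrix.mul_sub, Matrix.sub_mul, hRAR] at this
  set D := CFC.sqrt C with hDdef
  have hDD : D * D = C := CFC.sqrt_mul_sqrt_self C hCpd.posSemidef.nonneg
  have hDherm : D.IsHermitian := (Matrix.nonneg_iff_posSemidef.mp (CFC.sqrt_nonneg C)).1
  have hDunit : IsUnit D := my_sqrt_isUnit hCpd
  have hDdet : IsUnit D.det := (Matrix.isUnit_iff_isUnit_det D).mp hDunit
  have key : (1 - C⁻¹).PosSemidef := by
    have := hC1.conjTranspose_mul_mul_same D⁻¹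
    have hDCD : D⁻¹ * C * D⁻¹ = 1 := by
      rw [← hDD, ← Matrix.mul_assoc, Matrix.mul_assoc (D⁻¹ * D),
        Matrix.mul_nonsing_inv D hDdet, Matrix.nonsing_inv_mul D hDdet, Matrix.mul_one]
    have hDDinv : D⁻¹ * 1 * D⁻¹ = C⁻¹ := by
      rw [Matrix.mul_one, ← Matrix.mul_inv_rev, hDD]
    rwa [hDherm.inv.eq, Matrix.mul_sub, Matrix.sub_mul, hDCD, hDDinv] at this
  have hCinv : C⁻¹ = R * B⁻¹ * R := by
    rw [hCdef, Matrix.mul_inv_rev, Matrix.mul_inv_rev,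
      Matrix.nonsing_inv_nonsing_inv R hRdet, Matrix.mul_assoc]
  have final := key.conjTranspose_mul_mul_same R⁻¹
  have h1 : R⁻¹ * 1 * R⁻¹ = A⁻¹ := by
    rw [Matrix.mul_one, ← Matrix.mul_inv_rev, hRR]
  have h2 : R⁻¹ * C⁻¹ * R⁻¹ = B⁻¹ := by
    rw [hCinv, ← Matrix.mul_assoc, ← Matrix.mul_assoc, Matrix.nonsing_inv_mul R hRdet,
      Matrix.one_mul, Matrix.mul_assoc, Matrix.mul_nonsing_inv R hRdet, Matrix.mul_one]
  rwa [hRiherm.eq, Matrix.mul_sub, Matrix.sub_mul, h1, h2] at final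

/-- if T ⪰ S G⁻¹ S then trace(S T⁻¹) ≤ trace(G S⁻¹). -/
theorem mpz_le_mai
    (l : ℕ)
    (S G T : Matrix (Fin l) (Fin l) ℝ)
    (hSsym : S.IsSymm) (hSpd : S.PosDef)
    (hGsym : G.IsSymm) (hGpd : G.PosDef)
    (hTsym : T.IsSymm) (hTpd : T.PosDef)
    (hLoewner : (T - S * G⁻¹ * S).PosSemidef) :
    (S * T⁻¹).trace ≤ (G * S⁻¹).trace := by
  have hSdet : IsUnit S.det := (Matrix.isUnit_iff_isUnit_det S).mp hSpd.isUnit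
  have hGdet : IsUnit G.det := (Matrix.isUnit_iff_isUnit_det G).mp hGpd.isUnit
  have hMpd : (S * G⁻¹ * S).PosDef := by
    have := my_congr_posDef hGpd.inv hSpd.isUnit
    rwa [hSpd.1.eq] at this
  have hdiff := my_inv_antitone hMpd hTpd hLoewner
  have hMinv : (S * G⁻¹ * S)⁻¹ = S⁻¹ * G * S⁻¹ := by
    rw [Matrix.mul_inv_rev, Matrix.mul_inv_rev, Matrix.nonsing_inv_nonsing_inv G hGdet,
      ← Matrix.mul_assoc]
  rw [hMinv] at hdiff
  have htr := my_trace_mul_nonneg hSpd.posSemidef hdiff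
  have hS : S * (S⁻¹ * G * S⁻¹ - T⁻¹) = G * S⁻¹ - S * T⁻¹ := by
    rw [Matrix.mul_sub, ← Matrix.mul_assoc, ← Matrix.mul_assoc,
      Matrix.mul_nonsing_inv S hSdet, Matrix.one_mul]
  rw [hS, trace_sub] at htr
  linarith
end

section
/- Let S', T' ∈ ℝ^{l×l} be symmetric positive definite, P the rank-r spectral projection of S'. Then for each 1 ≤ i ≤ l, λᵢ(S'(T')⁻¹ P) ≤ λᵢ(S'(T')⁻¹), where λᵢ denotes the i-th largest eigenvalue. -/
open Matrix

open Polynomial in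
private lemma charpoly_conj' {n : Type*} [Fintype n] [DecidableEq n]
    (U A : Matrix n n ℝ) (hU : IsUnit U.det) :
    (U * A * U⁻¹).charpoly = A.charpoly := by
  have hmap : ∀ B C : Matrix n n ℝ, (B * C).map (Polynomial.C : ℝ →+* ℝ[X])
      = B.map Polynomial.C * C.map Polynomial.C := fun B C => Matrix.map_mul
  have h1 : (U.map (Polynomial.C : ℝ →+* ℝ[X])) * ((U⁻¹).map Polynomial.C) = 1 := by
    rw [← hmap, Matrix.mul_nonsing_inv _ hU]; simp
  have key : charmatrix (U * A * U⁻¹) =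
      U.map Polynomial.C * charmatrix A * (U⁻¹).map Polynomial.C := by
    unfold charmatrix
    rw [mul_sub, sub_mul, RingHom.mapMatrix_apply, RingHom.mapMatrix_apply, hmap, hmap]
    congr 1
    rw [scalar_apply, ← Matrix.smul_one_eq_diagonal, mul_smul_comm, smul_mul_assoc, mul_one, h1,
      Matrix.smul_one_eq_diagonal]
  have hdet : (U.map (Polynomial.C : ℝ →+* ℝ[X])).det * ((U⁻¹).map Polynomial.C).det = 1 := by
    rw [← det_mul, h1, det_one]
  rw [Matrix.charpoly, Matrix.charpoly, key, det_mul, det_mul, mul_comm, ← mul_assoc,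
    mul_comm (((U⁻¹).map _).det), hdet, one_mul]

open Polynomial in
private lemma charpoly_diag' {n : ℕ} (d : Fin n → ℝ) :
    (Matrix.diagonal d).charpoly = ∏ i, (X - C (d i)) := by
  rw [Matrix.charpoly_of_upperTriangular _ (Matrix.blockTriangular_diagonal _)]
  simp

open Polynomial in
private lemma charpoly_hermitian' {n : ℕ} (A : Matrix (Fin n) (Fin n) ℝ) (hA : A.IsHermitian) :
    A.charpoly = ∏ i, (X - C (hA.eigenvalues i)) := by
  have hU : ((hA.eigenvectorUnitary : Matrix (Fin n) (Fin n) ℝ))⁻¹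
      = star (hA.eigenvectorUnitary : Matrix (Fin n) (Fin n) ℝ) :=
    Matrix.inv_eq_left_inv (by simpa using (Matrix.mem_unitaryGroup_iff').mp hA.eigenvectorUnitary.2)
  have hdet : IsUnit ((hA.eigenvectorUnitary : Matrix (Fin n) (Fin n) ℝ)).det := by
    apply Matrix.isUnit_det_of_left_inverse
      (B := star (hA.eigenvectorUnitary : Matrix (Fin n) (Fin n) ℝ))
    simpa using (Matrix.mem_unitaryGroup_iff').mp hA.eigenvectorUnitary.2
  have h0 := hA.spectral_theorem
  have heq : A.charpoly = (Matrix.diagonal (RCLike.ofReal ∘ hA.eigenvalues)).charpoly := by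
    conv_lhs => rw [h0, Unitary.conjStarAlgAut_apply, ← hU]
    exact charpoly_conj' _ _ hdet
  rw [heq, Matrix.charpoly_of_upperTriangular _ (Matrix.blockTriangular_diagonal _)]
  simp

open Polynomial in
private lemma multiset_eq_of_prod_eq' {n : ℕ} (a b : Fin n → ℝ)
    (h : ∏ i, (X - C (a i)) = ∏ i, (X - C (b i))) :
    Multiset.map a Finset.univ.val = Multiset.map b Finset.univ.val := by
  have ha : (∏ i, (X - C (a i)))
      = ((Multiset.map a Finset.univ.val).map fun x => X - C x).prod := by
    rw [Multiset.map_map]; rfl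
  have hb : (∏ i, (X - C (b i)))
      = ((Multiset.map b Finset.univ.val).map fun x => X - C x).prod := by
    rw [Multiset.map_map]; rfl
  have := congrArg Polynomial.roots (ha ▸ hb ▸ h)
  rwa [roots_multiset_prod_X_sub_C, roots_multiset_prod_X_sub_C] at this

private lemma card_filter_comp_eq' {n : ℕ} (a b : Fin n → ℝ)
    (h : Multiset.map a Finset.univ.val = Multiset.map b Finset.univ.val)
    (p : ℝ → Prop) [DecidablePred p] :
    (Finset.univ.filter fun j => p (a j)).card = (Finset.univ.filter fun j => p (b j)).card := by
  have := congrArg (Multiset.countP p) h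
  rw [Multiset.countP_map, Multiset.countP_map] at this
  simpa [Finset.card, Finset.filter] using this

private lemma quad_form_eq' {n : ℕ} (M : Matrix (Fin n) (Fin n) ℝ) (hM : M.IsHermitian)
    (x : Fin n → ℝ) :
    x ⬝ᵥ (M *ᵥ x) = ∑ j, hM.eigenvalues j *
      ((star (hM.eigenvectorUnitary : Matrix (Fin n) (Fin n) ℝ) *ᵥ x) j)^2 := by
  set U : Matrix (Fin n) (Fin n) ℝ := (hM.eigenvectorUnitary : Matrix (Fin n) (Fin n) ℝ)
  have hsU : star U = Uᵀ := by
    rw [Matrix.star_eq_conjTranspose, Matrix.conjTranspose_eq_transpose_of_trivial]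
  have hdiag : Matrix.diagonal (RCLike.ofReal ∘ hM.eigenvalues)
      = Matrix.diagonal hM.eigenvalues := by simp
  conv_lhs => rw [hM.spectral_theorem, Unitary.conjStarAlgAut_apply]
  rw [hdiag, hsU, ← Matrix.mulVec_mulVec, ← Matrix.mulVec_mulVec,
    Matrix.dotProduct_mulVec, Matrix.mulVec_transpose]
  simp only [dotProduct, Matrix.mulVec_diagonal]
  exact Finset.sum_congr rfl fun j _ => by ring

private lemma norm_form_eq' {n : ℕ} (U : Matrix (Fin n) (Fin n) ℝ)
    (hU : U ∈ Matrix.unitaryGroup (Fin n) ℝ)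
    (x : Fin n → ℝ) : ∑ j, ((star U *ᵥ x) j)^2 = x ⬝ᵥ x := by
  have hsU : star U = Uᵀ := by
    rw [Matrix.star_eq_conjTranspose, Matrix.conjTranspose_eq_transpose_of_trivial]
  have h1 : U * Uᵀ = 1 := by
    have := (Matrix.mem_unitaryGroup_iff).mp hU
    rwa [Matrix.star_eq_conjTranspose, Matrix.conjTranspose_eq_transpose_of_trivial] at this
  have h2 : ∑ j, ((star U *ᵥ x) j)^2 = (star U *ᵥ x) ⬝ᵥ (star U *ᵥ x) := by
    simp [dotProduct, sq]
  rw [h2, hsU, Matrix.mulVec_transpose, ← Matrix.dotProduct_mulVec,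
    Matrix.mulVec_vecMul, h1, Matrix.one_mulVec]

private lemma eigs_mono' {n : ℕ} (M N : Matrix (Fin n) (Fin n) ℝ)
    (hM : M.IsHermitian) (hN : N.IsHermitian) (hMN : (N - M).PosSemidef)
    (μ ν : Fin n → ℝ) (hμ : Antitone μ) (hν : Antitone ν)
    (hmM : Multiset.map μ Finset.univ.val = Multiset.map hM.eigenvalues Finset.univ.val)
    (hmN : Multiset.map ν Finset.univ.val = Multiset.map hN.eigenvalues Finset.univ.val)
    (i : Fin n) : μ i ≤ ν i := by
  by_contra hlt
  push_neg at hlt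
  set c := μ i
  set t := ν i
  set evM := hM.eigenvalues with hevM
  set evN := hN.eigenvalues with hevN
  classical
  set A : Finset (Fin n) := Finset.univ.filter (fun j => evM j < c) with hA
  set B : Finset (Fin n) := Finset.univ.filter (fun j => t < evN j) with hB
  have hcardA : A.card + (i.val + 1) ≤ n := by
    have h1 : (Finset.univ.filter fun j => ¬ (evM j < c)).card
        = (Finset.univ.filter fun j => ¬ (μ j < c)).card :=
      (card_filter_comp_eq' μ evM hmM (fun x => ¬ (x < c))).symm
    have h2 : Finset.Iic i ⊆ Finset.univ.filter fun j => ¬ (μ j < c) := by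
      intro j hj
      simp only [Finset.mem_filter, Finset.mem_univ, true_and, not_lt]
      exact hμ (Finset.mem_Iic.mp hj)
    have h3 := Finset.card_le_card h2
    rw [Fin.card_Iic] at h3
    have h4 := Finset.card_filter_add_card_filter_not
      (s := (Finset.univ : Finset (Fin n))) (p := fun j => evM j < c)
    rw [Finset.card_univ, Fintype.card_fin] at h4
    have h5 : A.card = (Finset.univ.filter (fun j => evM j < c)).card := rfl
    omega
  have hcardB : B.card ≤ i.val := by
    have h1 : (Finset.univ.filter fun j => ¬ (t < evN j)).card
        = (Finset.univ.filter fun j => ¬ (t < ν j)).card :=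
      (card_filter_comp_eq' ν evN hmN (fun x => ¬ (t < x))).symm
    have h2 : Finset.Ici i ⊆ Finset.univ.filter fun j => ¬ (t < ν j) := by
      intro j hj
      simp only [Finset.mem_filter, Finset.mem_univ, true_and, not_lt]
      exact hν (Finset.mem_Ici.mp hj)
    have h3 := Finset.card_le_card h2
    rw [Fin.card_Ici] at h3
    have h4 := Finset.card_filter_add_card_filter_not
      (s := (Finset.univ : Finset (Fin n))) (p := fun j => t < evN j)
    rw [Finset.card_univ, Fintype.card_fin] at h4
    have h5 : B.card = (Finset.univ.filter (fun j => t < evN j)).card := rfl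
    have hi : i.val < n := i.isLt
    omega
  set U₁ : Matrix (Fin n) (Fin n) ℝ := (hM.eigenvectorUnitary : Matrix (Fin n) (Fin n) ℝ)
  set U₂ : Matrix (Fin n) (Fin n) ℝ := (hN.eigenvectorUnitary : Matrix (Fin n) (Fin n) ℝ)
  set φ : (Fin n → ℝ) →ₗ[ℝ] ({j // j ∈ A} → ℝ) × ({j // j ∈ B} → ℝ) :=
    LinearMap.prod
      ((LinearMap.funLeft ℝ ℝ (fun a : {j // j ∈ A} => (a : Fin n))).comp
        (Matrix.mulVecLin (star U₁)))
      ((LinearMap.funLeft ℝ ℝ (fun b : {j // j ∈ B} => (b : Fin n))).comp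
        (Matrix.mulVecLin (star U₂))) with hφ
  have hker : ∃ x : Fin n → ℝ, x ≠ 0 ∧ φ x = 0 := by
    by_contra hc
    push_neg at hc
    have hinj : Function.Injective φ := by
      rw [← LinearMap.ker_eq_bot, Submodule.eq_bot_iff]
      intro x hx
      by_contra hx0
      exact hc x hx0 (LinearMap.mem_ker.mp hx)
    have := LinearMap.finrank_le_finrank_of_injective hinj
    rw [Module.finrank_pi, Module.finrank_prod, Module.finrank_pi, Module.finrank_pi,
      Fintype.card_fin, Fintype.card_coe, Fintype.card_coe] at this
    omega
  obtain ⟨x, hx0, hxker⟩ := hker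
  have hyA : ∀ j ∈ A, (star U₁ *ᵥ x) j = 0 := by
    intro j hj
    have := congrArg Prod.fst hxker
    exact congrFun this ⟨j, hj⟩
  have hzB : ∀ j ∈ B, (star U₂ *ᵥ x) j = 0 := by
    intro j hj
    have := congrArg Prod.snd hxker
    exact congrFun this ⟨j, hj⟩
  have hq : (0:ℝ) < x ⬝ᵥ x := by
    have h1 : x ⬝ᵥ x = ∑ j, (x j)^2 := by simp [dotProduct, sq]
    rw [h1]
    obtain ⟨j, hj⟩ := Function.ne_iff.mp hx0
    exact Finset.sum_pos' (fun k _ => sq_nonneg _) ⟨j, Finset.mem_univ j, by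
      have hxj : x j ≠ 0 := by simpa using hj
      positivity⟩
  have hMx : c * (x ⬝ᵥ x) ≤ x ⬝ᵥ (M *ᵥ x) := by
    rw [quad_form_eq' M hM x, ← norm_form_eq' U₁ hM.eigenvectorUnitary.2 x, Finset.mul_sum]
    apply Finset.sum_le_sum
    intro j _
    by_cases hj : j ∈ A
    · rw [hyA j hj]; simp
    · have : ¬ (evM j < c) := by simpa [hA] using hj
      exact mul_le_mul_of_nonneg_right (not_lt.mp this) (sq_nonneg _)
  have hNx : x ⬝ᵥ (N *ᵥ x) ≤ t * (x ⬝ᵥ x) := by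
    rw [quad_form_eq' N hN x, ← norm_form_eq' U₂ hN.eigenvectorUnitary.2 x, Finset.mul_sum]
    apply Finset.sum_le_sum
    intro j _
    by_cases hj : j ∈ B
    · rw [hzB j hj]; simp
    · have : ¬ (t < evN j) := by simpa [hB] using hj
      exact mul_le_mul_of_nonneg_right (not_lt.mp this) (sq_nonneg _)
  have hpsd : (0:ℝ) ≤ x ⬝ᵥ (N *ᵥ x) - x ⬝ᵥ (M *ᵥ x) := by
    have := hMN.dotProduct_mulVec_nonneg x
    rwa [star_trivial, Matrix.sub_mulVec, dotProduct_sub] at this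
  have hct : c * (x ⬝ᵥ x) ≤ t * (x ⬝ᵥ x) := by linarith
  exact absurd (le_of_mul_le_mul_right hct hq) (not_le.mpr hlt)

private lemma antitone_eq_of_multiset_eq' {n : ℕ} (a b : Fin n → ℝ)
    (ha : Antitone a) (hb : Antitone b)
    (h : Multiset.map a Finset.univ.val = Multiset.map b Finset.univ.val) :
    a = b := by
  have hval : (Finset.univ.val : Multiset (Fin n)) = ↑(List.finRange n) := rfl
  rw [hval, Multiset.map_coe, Multiset.map_coe, Multiset.coe_eq_coe,
    ← List.ofFn_eq_map, ← List.ofFn_eq_map] at h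
  have sa : (List.ofFn a).Pairwise (· ≥ ·) :=
    List.pairwise_ofFn.mpr (fun i j hij => ha hij.le)
  have sb : (List.ofFn b).Pairwise (· ≥ ·) :=
    List.pairwise_ofFn.mpr (fun i j hij => hb hij.le)
  exact List.ofFn_inj.mp (List.Perm.eq_of_pairwise (fun _ _ _ _ h1 h2 => le_antisymm h2 h1) sa sb h)

/-- λᵢ(S'(T')⁻¹ P) ≤ λᵢ(S'(T')⁻¹) for all i, where P is the
rank-r spectral projection of S'. -/
theorem mpz_rr_le_mpz_ext_eigenvalues
    (l r : ℕ) (hr1 : 1 ≤ r) (hrl : r ≤ l)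
    (S' T' V : Matrix (Fin l) (Fin l) ℝ) (d : Fin l → ℝ)
    (hSsym : S'.IsSymm) (hSpd : S'.PosDef)
    (hTsym : T'.IsSymm) (hTpd : T'.PosDef)
    (hV : Vᵀ * V = 1) (hd : Antitone d)
    (hSdec : S' = V * Matrix.diagonal d * Vᵀ)
    (P : Matrix (Fin l) (Fin l) ℝ) (hP : P = V * indDiag l r * Vᵀ)
    -- eigenvalues of S'(T')⁻¹P
    (P₁ : Matrix (Fin l) (Fin l) ℝ) (hP₁ : IsUnit P₁.det)
    (μ : Fin l → ℝ) (hμ : Antitone μ)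
    (hdec₁ : S' * T'⁻¹ * P = P₁ * Matrix.diagonal μ * P₁⁻¹)
    -- eigenvalues of S'(T')⁻¹
    (P₂ : Matrix (Fin l) (Fin l) ℝ) (hP₂ : IsUnit P₂.det)
    (ν : Fin l → ℝ) (hν : Antitone ν)
    (hdec₂ : S' * T'⁻¹ = P₂ * Matrix.diagonal ν * P₂⁻¹) :
    ∀ i : Fin l, μ i ≤ ν i := by
  classical
  -- basic facts about V
  have hVV : V * Vᵀ = 1 := mul_eq_one_comm.mp hV
  have hconj : ∀ A : Matrix (Fin l) (Fin l) ℝ, Aᴴ = Aᵀ := fun A =>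
    Matrix.conjTranspose_eq_transpose_of_trivial A
  -- product of two V-diagonal-Vᵀ matrices
  have hVdV : ∀ e f : Fin l → ℝ, (V * Matrix.diagonal e * Vᵀ) * (V * Matrix.diagonal f * Vᵀ)
      = V * Matrix.diagonal (fun j => e j * f j) * Vᵀ := by
    intro e f
    calc (V * Matrix.diagonal e * Vᵀ) * (V * Matrix.diagonal f * Vᵀ)
        = V * Matrix.diagonal e * (Vᵀ * V) * Matrix.diagonal f * Vᵀ := by
          simp only [Matrix.mul_assoc]
      _ = V * (Matrix.diagonal e * Matrix.diagonal f) * Vᵀ := by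
          rw [hV]; simp only [Matrix.mul_one, Matrix.mul_assoc]
      _ = V * Matrix.diagonal (fun j => e j * f j) * Vᵀ := by
          rw [Matrix.diagonal_mul_diagonal]
  have hVherm : ∀ e : Fin l → ℝ, (V * Matrix.diagonal e * Vᵀ).IsHermitian := by
    intro e
    have : (V * Matrix.diagonal e * Vᵀ)ᴴ = V * Matrix.diagonal e * Vᵀ := by
      rw [hconj]
      rw [Matrix.transpose_mul, Matrix.transpose_mul, Matrix.transpose_transpose,
        Matrix.diagonal_transpose, Matrix.mul_assoc]
    exact this
  -- d is nonnegative
  have hdiagd : Matrix.diagonal d = Vᵀ * S' * V := by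
    rw [hSdec]
    calc Matrix.diagonal d = 1 * Matrix.diagonal d * 1 := by simp
      _ = (Vᵀ * V) * Matrix.diagonal d * (Vᵀ * V) := by rw [hV]
      _ = Vᵀ * (V * Matrix.diagonal d * Vᵀ) * V := by simp only [Matrix.mul_assoc]
  have hdnn : ∀ j, 0 ≤ d j := by
    have hpsd : (Vᵀ * S' * V).PosSemidef := by
      have := hSpd.posSemidef.conjTranspose_mul_mul_same V
      rwa [hconj] at this
    rw [← hdiagd] at hpsd
    exact Matrix.posSemidef_diagonal_iff.mp hpsd
  -- square root R of T'⁻¹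
  have hTi : (T'⁻¹).PosDef := hTpd.inv
  set R : Matrix (Fin l) (Fin l) ℝ := (open MatrixOrder in CFC.sqrt (T'⁻¹)) with hRdef
  have hRpsd : R.PosSemidef := (open MatrixOrder in (CFC.sqrt_nonneg (T'⁻¹)).posSemidef)
  have hRherm : R.IsHermitian := hRpsd.1
  have hRR : R * R = T'⁻¹ := (open MatrixOrder in CFC.sqrt_mul_sqrt_self (T'⁻¹) hTi.posSemidef.nonneg)
  have hRdet : IsUnit R.det := by
    have hdet : R.det * R.det = (T'⁻¹).det := by rw [← Matrix.det_mul, hRR]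
    have : (T'⁻¹).det ≠ 0 := hTi.det_pos.ne'
    have hne : R.det ≠ 0 := fun h => this (by rw [← hdet, h, mul_zero])
    exact isUnit_iff_ne_zero.mpr hne
  -- S'P, commutation, and S' - S'P ⪰ 0
  set ind : Fin l → ℝ := fun j => if (j : ℕ) < r then (1 : ℝ) else 0 with hind
  have hPind : P = V * Matrix.diagonal ind * Vᵀ := hP
  have hSP : S' * P = V * Matrix.diagonal (fun j => d j * ind j) * Vᵀ := by
    rw [hSdec, hPind, hVdV]
  have hPS : P * S' = S' * P := by
    rw [hSdec, hPind, hVdV, hVdV]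
    have : (fun j => ind j * d j) = fun j => d j * ind j := funext fun j => mul_comm _ _
    rw [this]
  have hSPherm : (S' * P).IsHermitian := hSP ▸ hVherm _
  have hsub : (S' - S' * P).PosSemidef := by
    have heq : S' - S' * P = V * Matrix.diagonal (fun j => d j * (1 - ind j)) * Vᵀ := by
      rw [hSP, hSdec]
      rw [← Matrix.sub_mul, ← Matrix.mul_sub, Matrix.diagonal_sub]
      have hfun : (fun j => d j - (fun k => d k * ind k) j) = fun j => d j * (1 - ind j) := by
        funext j; simp [mul_sub]
      rw [hfun]
    rw [heq]
    have hnn : (0 : Fin l → ℝ) ≤ fun j => d j * (1 - ind j) := by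
      intro j
      by_cases hj : (j : ℕ) < r <;> simp [hind, hj, hdnn j]
    have := (Matrix.PosSemidef.diagonal hnn).mul_mul_conjTranspose_same V
    rwa [hconj] at this
  -- the two symmetric matrices
  set M : Matrix (Fin l) (Fin l) ℝ := R * (S' * P) * R with hMdef
  set N : Matrix (Fin l) (Fin l) ℝ := R * S' * R with hNdef
  have hMherm : M.IsHermitian := by
    have : Mᴴ = M := by
      rw [hMdef, Matrix.conjTranspose_mul, Matrix.conjTranspose_mul, hRherm.eq, hSPherm.eq]
      simp only [Matrix.mul_assoc]
    exact this
  have hNherm : N.IsHermitian := by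
    have : Nᴴ = N := by
      rw [hNdef, Matrix.conjTranspose_mul, Matrix.conjTranspose_mul, hRherm.eq,
        hSpd.isHermitian.eq]
      simp only [Matrix.mul_assoc]
    exact this
  have hNM : (N - M).PosSemidef := by
    have heq' : N - M = R * (S' - S' * P) * R := by
      rw [hMdef, hNdef, Matrix.mul_sub, Matrix.sub_mul]
    have h := hsub.mul_mul_conjTranspose_same R
    rw [hRherm.eq] at h
    rw [heq']
    exact h
  -- invertibility of S'T'⁻¹
  have hdetST : IsUnit (S' * T'⁻¹).det := by
    rw [Matrix.det_mul]
    exact isUnit_iff_ne_zero.mpr (mul_ne_zero hSpd.det_pos.ne' hTi.det_pos.ne')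
  -- charpoly of N
  open Polynomial in
  have hcN : N.charpoly = ∏ i, (X - C (ν i)) := by
    have h1 : N = R * (S' * T'⁻¹) * R⁻¹ := by
      rw [← hRR]
      calc R * S' * R = R * S' * R * (R * R⁻¹) := by rw [Matrix.mul_nonsing_inv _ hRdet]; simp
        _ = R * (S' * (R * R)) * R⁻¹ := by simp only [Matrix.mul_assoc]
    rw [h1, charpoly_conj' _ _ hRdet, hdec₂, charpoly_conj' _ _ hP₂, charpoly_diag']
  -- charpoly of M
  open Polynomial in
  have hcM : M.charpoly = ∏ i, (X - C (μ i)) := by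
    have h2 : S' * P * T'⁻¹ = (S' * T'⁻¹)⁻¹ * (S' * T'⁻¹ * P) * ((S' * T'⁻¹)⁻¹)⁻¹ := by
      rw [Matrix.nonsing_inv_nonsing_inv _ hdetST]
      calc S' * P * T'⁻¹ = P * (S' * T'⁻¹) := by
            rw [← Matrix.mul_assoc, hPS]
        _ = (S' * T'⁻¹)⁻¹ * (S' * T'⁻¹) * P * (S' * T'⁻¹) := by
            rw [Matrix.nonsing_inv_mul _ hdetST]; simp
        _ = (S' * T'⁻¹)⁻¹ * (S' * T'⁻¹ * P) * (S' * T'⁻¹) := by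
            simp only [Matrix.mul_assoc]
    have h3 : M = R * (S' * P * T'⁻¹) * R⁻¹ := by
      rw [← hRR]
      calc R * (S' * P) * R = R * (S' * P) * R * (R * R⁻¹) := by
            rw [Matrix.mul_nonsing_inv _ hRdet]; simp
        _ = R * (S' * P * (R * R)) * R⁻¹ := by simp only [Matrix.mul_assoc]
    rw [h3, charpoly_conj' _ _ hRdet, h2,
      charpoly_conj' _ _ (Matrix.isUnit_nonsing_inv_det _ hdetST), hdec₁,
      charpoly_conj' _ _ hP₁, charpoly_diag']
  -- multiset equalities
  have hmM : Multiset.map μ Finset.univ.val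
      = Multiset.map hMherm.eigenvalues Finset.univ.val :=
    multiset_eq_of_prod_eq' _ _ (hcM ▸ charpoly_hermitian' M hMherm)
  have hmN : Multiset.map ν Finset.univ.val
      = Multiset.map hNherm.eigenvalues Finset.univ.val :=
    multiset_eq_of_prod_eq' _ _ (hcN ▸ charpoly_hermitian' N hNherm)
  exact eigs_mono' M N hMherm hNherm hNM μ ν hμ hν hmM hmN
end

section
/- Let R ∈ ℝ^{m×m} be symmetric positive definite, H ∈ ℝ^{m×l} of full column rank (l ≤ m), and S = Hᵗ R⁻¹ H. Then W = S⁻¹ Hᵗ R⁻¹ is the unique minimizer of trace(X R Xᵗ) over all X ∈ ℝ^{l×m} satisfying X H = I_l. -/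
open Matrix

lemma lcmv_aux_inj {m l : ℕ} (H : Matrix (Fin m) (Fin l) ℝ) (hrank : H.rank = l) :
    ∀ x : Fin l → ℝ, H *ᵥ x = 0 → x = 0 := by
  have hker : LinearMap.ker H.mulVecLin = ⊥ := by
    have h1 := LinearMap.finrank_range_add_finrank_ker H.mulVecLin
    rw [Matrix.rank] at hrank
    rw [hrank] at h1
    simp only [Module.finrank_fintype_fun_eq_card, Fintype.card_fin] at h1
    have h0 : Module.finrank ℝ (LinearMap.ker H.mulVecLin) = 0 := by omega
    exact Submodule.finrank_eq_zero.mp h0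
  intro x hx
  have : x ∈ LinearMap.ker H.mulVecLin := by
    simpa [LinearMap.mem_ker] using hx
  rw [hker] at this
  simpa using this

lemma lcmv_trace_pos {m l : ℕ} (R : Matrix (Fin m) (Fin m) ℝ) (hRpd : R.PosDef)
    (D : Matrix (Fin l) (Fin m) ℝ) :
    0 ≤ (D * R * Dᵀ).trace ∧ (D ≠ 0 → 0 < (D * R * Dᵀ).trace) := by
  have hdiag : ∀ i, (D * R * Dᵀ) i i = dotProduct (D i) (R *ᵥ (D i)) := by
    intro i
    simp only [Matrix.mul_apply, Matrix.transpose_apply, dotProduct, Matrix.mulVec, dotProduct]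
    simp only [Finset.sum_mul]
    rw [Finset.sum_comm]
    refine Finset.sum_congr rfl fun j _ => ?_
    rw [Finset.mul_sum]
    refine Finset.sum_congr rfl fun k _ => ?_
    ring
  have hnn : ∀ i, 0 ≤ (D * R * Dᵀ) i i := by
    intro i
    rw [hdiag i]
    have := hRpd.posSemidef.dotProduct_mulVec_nonneg (D i)
    simpa using this
  constructor
  · exact Finset.sum_nonneg fun i _ => hnn i
  · intro hD
    have : ∃ i, D i ≠ 0 := by
      by_contra h
      push_neg at h
      exact hD (by ext i j; simpa using congrFun (h i) j)
    obtain ⟨i, hi⟩ := this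
    have hpos : 0 < (D * R * Dᵀ) i i := by
      rw [hdiag i]
      have := hRpd.dotProduct_mulVec_pos hi
      simpa using this
    exact Finset.sum_pos' (fun j _ => hnn j) ⟨i, Finset.mem_univ i, hpos⟩

/-- LCMV optimality: W = S⁻¹ Hᵗ R⁻¹ is the unique minimizer of
trace(X R Xᵗ) over X with X H = I. -/
theorem lcmv_optimality
    (m l : ℕ) (hlm : l ≤ m)
    (R : Matrix (Fin m) (Fin m) ℝ) (hRsym : R.IsSymm) (hRpd : R.PosDef)
    (H : Matrix (Fin m) (Fin l) ℝ) (hrank : H.rank = l)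
    (S : Matrix (Fin l) (Fin l) ℝ) (hS : S = Hᵀ * R⁻¹ * H)
    (W : Matrix (Fin l) (Fin m) ℝ) (hW : W = S⁻¹ * Hᵀ * R⁻¹) :
    W * H = 1 ∧
      ∀ X : Matrix (Fin l) (Fin m) ℝ, X * H = 1 →
        (W * R * Wᵀ).trace ≤ (X * R * Xᵀ).trace ∧
          (X ≠ W → (W * R * Wᵀ).trace < (X * R * Xᵀ).trace) := by
  have Hinj := lcmv_aux_inj H hrank
  have hRinv : R⁻¹.PosDef := hRpd.inv
  -- S is positive definite
  have hSpd : S.PosDef := by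
    have hHerm : S.IsHermitian := by
      rw [hS]
      have : Hᴴ = Hᵀ := rfl
      rw [← this]
      exact isHermitian_conjTranspose_mul_mul H hRinv.1
    refine Matrix.PosDef.of_dotProduct_mulVec_pos hHerm fun x hx => ?_
    have hx' : H *ᵥ x ≠ 0 := fun h => hx (Hinj x h)
    have := hRinv.dotProduct_mulVec_pos hx'
    rw [hS]
    have hHT : Hᵀ = Hᴴ := rfl
    rw [hHT]
    simpa only [star_mulVec, dotProduct_mulVec, vecMul_vecMul] using this
  have hSunit : IsUnit S.det := hSpd.det_pos.ne'.isUnit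
  have hRunit : IsUnit R.det := hRpd.det_pos.ne'.isUnit
  have hWH : W * H = 1 := by
    rw [hW, Matrix.mul_assoc, Matrix.mul_assoc, ← Matrix.mul_assoc Hᵀ, ← hS,
      Matrix.nonsing_inv_mul S hSunit]
  refine ⟨hWH, fun X hXH => ?_⟩
  set D := X - W with hD
  have hXD : X = W + D := by rw [hD]; abel
  have hDH : D * H = 0 := by
    rw [hD, Matrix.sub_mul, hXH, hWH, sub_self]
  -- cross term vanishes: W * R * Dᵀ = 0
  have hcross : W * R * Dᵀ = 0 := by
    rw [hW]
    rw [Matrix.mul_assoc (S⁻¹ * Hᵀ), Matrix.nonsing_inv_mul R hRunit, Matrix.mul_one,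
      Matrix.mul_assoc]
    have : Hᵀ * Dᵀ = (D * H)ᵀ := by rw [Matrix.transpose_mul]
    rw [this, hDH, Matrix.transpose_zero, Matrix.mul_zero]
  have hcross' : D * R * Wᵀ = 0 := by
    have : (D * R * Wᵀ)ᵀ = W * R * Dᵀ := by
      rw [Matrix.transpose_mul, Matrix.transpose_mul, Matrix.transpose_transpose,
        hRsym.eq, Matrix.mul_assoc]
    have h2 : (D * R * Wᵀ)ᵀ = 0 := by rw [this, hcross]
    calc D * R * Wᵀ = ((D * R * Wᵀ)ᵀ)ᵀ := by rw [Matrix.transpose_transpose]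
    _ = 0 := by rw [h2, Matrix.transpose_zero]
  have hsplit : X * R * Xᵀ = W * R * Wᵀ + D * R * Dᵀ := by
    have expand : X * R * Xᵀ = W * R * Wᵀ + W * R * Dᵀ + (D * R * Wᵀ + D * R * Dᵀ) := by
      rw [hXD, Matrix.transpose_add, Matrix.add_mul W D R,
        Matrix.add_mul (W * R) (D * R), Matrix.mul_add, Matrix.mul_add]
    rw [expand, hcross, hcross']
    abel
  have htr : (X * R * Xᵀ).trace = (W * R * Wᵀ).trace + (D * R * Dᵀ).trace := by
    rw [hsplit, Matrix.trace_add]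
  obtain ⟨hnn, hpos⟩ := lcmv_trace_pos R hRpd D
  constructor
  · rw [htr]; linarith
  · intro hXW
    have hDne : D ≠ 0 := fun h => hXW (sub_eq_zero.mp h)
    rw [htr]
    linarith [hpos hDne]
end
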